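/- Let Ω ⊆ ℂⁿ be a nonempty connected open set containing the origin that is invariant under coordinatewise multiplication by complex numbers of modulus one (i.e., if z ∈ Ω and |a_i| = 1 for all i, then (a₁z₁, …, aₙzₙ) ∈ Ω). Let μ ∈ ℤⁿ, and let f and g be holomorphic functions on Ω each satisfying the weight-μ equivariance f(a₁z₁, …, aₙzₙ) = a₁^{μ₁} ⋯ aₙ^{μₙ} f(z) (and likewise for g) for all such a and all z ∈ Ω. Then f and g are linearly dependent: there exist c₁, c₂ ∈ ℂ, not both zero, with c₁ f + c₂ g = 0 on Ω. -/

import Mathlib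

open Filter Metric Complex

lemma freq_circle : ∃ᶠ z in nhdsWithin (1:ℂ) {(1:ℂ)}ᶜ, ‖z‖ = 1 := by
  have hturn : Tendsto (fun k : ℕ => Complex.exp ((1/(k+1) : ℝ) * Complex.I)) atTop
      (nhdsWithin (1:ℂ) {(1:ℂ)}ᶜ) := by
    apply tendsto_nhdsWithin_of_tendsto_nhds_of_eventually_within
    · have h1 : Tendsto (fun k : ℕ => ((1/(k+1) : ℝ) : ℂ) * Complex.I) atTop (nhds 0) := by
        have : Tendsto (fun k : ℕ => (1/(k+1) : ℝ)) atTop (nhds 0) :=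
          tendsto_one_div_add_atTop_nhds_zero_nat
        have := (Complex.continuous_ofReal.tendsto 0).comp this
        simpa using this.mul_const Complex.I
      have := (Complex.continuous_exp.tendsto 0).comp h1
      simpa [Function.comp_def] using this
    · filter_upwards [eventually_ge_atTop 0] with k _
      simp only [Set.mem_compl_iff, Set.mem_singleton_iff]
      intro hk
      rw [Complex.exp_eq_one_iff] at hk
      obtain ⟨m, hm⟩ := hk
      have hm' : ((1/(k+1) : ℝ) : ℂ) = (m : ℂ) * (2 * Real.pi) := by
        have : ((1/(k+1) : ℝ) : ℂ) * I = ((m : ℂ) * (2 * Real.pi)) * I := by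
          rw [hm]; ring
        exact mul_right_cancel₀ Complex.I_ne_zero this
      have him : (1/(k+1) : ℝ) = (m : ℝ) * (2 * Real.pi) := by
        exact_mod_cast hm'
      have hpos : (0:ℝ) < 1/(k+1) := by positivity
      have hle : (1/(k+1) : ℝ) ≤ 1 := by
        rw [div_le_one (by positivity)]; linarith
      rcases le_or_gt m 0 with h | h
      · have : (m : ℝ) * (2 * Real.pi) ≤ 0 := by
          apply mul_nonpos_of_nonpos_of_nonneg
          · exact_mod_cast h
          · positivity
        nlinarith [him]
      · have hm1 : (1:ℝ) ≤ (m:ℝ) := by exact_mod_cast h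
        nlinarith [Real.pi_gt_three, him]
  apply hturn.frequently
  apply Filter.Frequently.of_forall
  intro k
  exact Complex.norm_exp_ofReal_mul_I _

lemma key_one_var (R : ℝ) (hR : 1 < R) (ψ : ℂ → ℂ)
    (hψ : AnalyticOnNhd ℂ ψ (Metric.ball 0 R)) (m : ℤ) (c : ℂ)
    (h : ∀ w : ℂ, ‖w‖ = 1 → ψ w = c * w ^ m) :
    (∀ w : ℂ, ‖w‖ ≤ 1 → ψ w = c * w ^ m.toNat) ∧ (m < 0 → c = 0) := by
  set k := m.toNat with hk
  set l := (-m).toNat with hl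
  set φ : ℂ → ℂ := fun w => ψ w * w ^ l with hφdef
  set χ : ℂ → ℂ := fun w => c * w ^ k with hχdef
  have hφ : AnalyticOnNhd ℂ φ (Metric.ball 0 R) := fun w hw =>
    (hψ w hw).mul (analyticAt_id.pow l)
  have hχ : AnalyticOnNhd ℂ χ (Metric.ball 0 R) := fun w hw =>
    analyticAt_const.mul (analyticAt_id.pow k)
  have h1mem : (1:ℂ) ∈ Metric.ball (0:ℂ) R := by
    simp [Metric.mem_ball, hR]
  have heq : Set.EqOn φ χ (Metric.ball 0 R) := by
    apply hφ.eqOn_of_preconnected_of_frequently_eq hχ (convex_ball (0:ℂ) R).isPreconnected h1mem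
    apply freq_circle.mono
    intro z hz
    have hz0 : z ≠ 0 := by intro h'; rw [h'] at hz; simp at hz
    have hml : m + (l : ℤ) = (k : ℤ) := by omega
    calc ψ z * z ^ l = (c * z ^ m) * z ^ l := by rw [h z hz]
      _ = c * (z ^ m * z ^ (l : ℤ)) := by rw [zpow_natCast]; ring
      _ = c * z ^ (m + (l:ℤ)) := by rw [zpow_add₀ hz0]
      _ = c * z ^ k := by rw [hml, zpow_natCast]
  have hc : m < 0 → c = 0 := by
    intro hm
    have h0mem : (0:ℂ) ∈ Metric.ball (0:ℂ) R := by
      simp [Metric.mem_ball]; linarith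
    have := heq h0mem
    have hk0 : k = 0 := by omega
    have hl0 : 0 < l := by omega
    simp only [hφdef, hχdef, hk0, pow_zero, mul_one, zero_pow hl0.ne', mul_zero] at this
    exact this.symm
  refine ⟨?_, hc⟩
  intro w hw
  have hwmem : w ∈ Metric.ball (0:ℂ) R := by
    simp [Metric.mem_ball]; calc ‖w‖ ≤ 1 := hw
      _ < R := hR
  by_cases hm : 0 ≤ m
  · have hl0 : l = 0 := by omega
    have := heq hwmem
    simpa [hφdef, hχdef, hl0] using this
  · have hc0 : c = 0 := hc (by omega)
    rw [hc0, zero_mul]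
    have hψ0 : ∀ v : ℂ, v ∈ Metric.ball (0:ℂ) R → v ≠ 0 → ψ v = 0 := by
      intro v hv hv0
      have := heq hv
      simp only [hφdef, hχdef, hc0, zero_mul] at this
      exact (mul_eq_zero.1 this).resolve_right (pow_ne_zero _ hv0)
    rcases eq_or_ne w 0 with rfl | hw0
    · have hcont : ContinuousAt ψ 0 := (hψ 0 (by simp [Metric.mem_ball]; linarith)).continuousAt
      have hev : ∀ᶠ v in nhdsWithin (0:ℂ) {(0:ℂ)}ᶜ, ψ v = 0 := by
        have hb : Metric.ball (0:ℂ) R ∈ nhds (0:ℂ) := Metric.ball_mem_nhds _ (by linarith)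
        filter_upwards [self_mem_nhdsWithin, eventually_nhdsWithin_of_eventually_nhds
          (eventually_of_mem hb (fun v hv => hv))] with v hv1 hv2
        exact hψ0 v hv2 hv1
      have l1 : Tendsto ψ (nhdsWithin (0:ℂ) {(0:ℂ)}ᶜ) (nhds (ψ 0)) :=
        hcont.tendsto.mono_left nhdsWithin_le_nhds
      have l2 : Tendsto ψ (nhdsWithin (0:ℂ) {(0:ℂ)}ᶜ) (nhds 0) :=
        (tendsto_congr' hev).2 tendsto_const_nhds
      exact tendsto_nhds_unique l1 l2
    · exact hψ0 w hwmem hw0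

lemma exp_I_zpow_ne_one {m : ℤ} (hm : m ≠ 0) : Complex.exp Complex.I ^ m ≠ 1 := by
  rw [← Complex.exp_int_mul]
  intro h
  rw [Complex.exp_eq_one_iff] at h
  obtain ⟨p, hp⟩ := h
  have hm' : (m : ℂ) = (p : ℂ) * (2 * Real.pi) := by
    have : (m : ℂ) * I = ((p : ℂ) * (2 * Real.pi)) * I := by rw [hp]; ring
    exact mul_right_cancel₀ Complex.I_ne_zero this
  have hre : (m : ℝ) = (p : ℝ) * (2 * Real.pi) := by exact_mod_cast hm'
  rcases eq_or_ne p 0 with rfl | hp0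
  · simp at hre; exact hm (by exact_mod_cast hre)
  · have : (Real.pi : ℝ) = ((m : ℚ) / (2 * p) : ℚ) := by
      push_cast
      field_simp at hre ⊢
      linarith
    exact irrational_pi ⟨_, this.symm⟩

lemma update_eq_affine {n : ℕ} (z : Fin n → ℂ) (i : Fin n) (w : ℂ) :
    Function.update z i (w * z i) = z + (w - 1) • (Pi.single i (z i) : Fin n → ℂ) := by
  funext j
  by_cases hj : j = i
  · subst hj; simp [Function.update_self, Pi.single_apply]; ring
  · simp [Function.update_of_ne hj, Pi.single_apply, hj]

lemma coordScale {n : ℕ} {Ω : Set (Fin n → ℂ)} {f : (Fin n → ℂ) → ℂ} {μ : Fin n → ℤ}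
    (hf : AnalyticOnNhd ℂ f Ω)
    (heqf : ∀ a : Fin n → ℂ, (∀ i, ‖a i‖ = 1) → ∀ z ∈ Ω,
      f (fun i => a i * z i) = (∏ i, a i ^ μ i) * f z)
    {r : ℝ} (hr : 0 < r) (hball : Metric.ball (0 : Fin n → ℂ) r ⊆ Ω)
    {z : Fin n → ℂ} (hz : z ∈ Metric.ball (0 : Fin n → ℂ) r) (i : Fin n) :
    (∀ w : ℂ, ‖w‖ ≤ 1 → f (Function.update z i (w * z i)) = f z * w ^ (μ i).toNat) ∧
      (μ i < 0 → f z = 0) := by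
  -- specialized equivariance
  have hcirc : ∀ w : ℂ, ‖w‖ = 1 → f (Function.update z i (w * z i)) = w ^ (μ i) * f z := by
    intro w hw
    set a : Fin n → ℂ := Function.update (fun _ => (1:ℂ)) i w with ha
    have ha1 : ∀ j, ‖a j‖ = 1 := by
      intro j; by_cases hj : j = i
      · subst hj; simp [ha, hw]
      · simp [ha, Function.update_of_ne hj]
    have hfun : (fun j => a j * z j) = Function.update z i (w * z i) := by
      funext j; by_cases hj : j = i
      · subst hj; simp [ha]
      · simp [ha, Function.update_of_ne hj]
    have hprod : (∏ j, a j ^ μ j) = w ^ (μ i) := by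
      rw [Finset.prod_eq_single i]
      · simp [ha]
      · intro j _ hj; simp [ha, Function.update_of_ne hj]
      · simp
    have := heqf a ha1 z (hball hz)
    rw [hfun, hprod] at this
    exact this
  by_cases hzi : z i = 0
  · -- degenerate coordinate
    have hupdate : ∀ w : ℂ, Function.update z i (w * z i) = z := by
      intro w; rw [hzi, mul_zero, ← hzi, Function.update_eq_self]
    by_cases hμ : μ i = 0
    · constructor
      · intro w _; rw [hupdate, hμ]; simp
      · intro h; omega
    · have hfz : f z = 0 := by
        have h1 := hcirc (Complex.exp Complex.I) (by
          simpa using Complex.norm_exp_ofReal_mul_I 1)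
        rw [hupdate] at h1
        have h2 : (Complex.exp Complex.I ^ (μ i) - 1) * f z = 0 := by
          linear_combination (-1 : ℂ) * h1
        rcases mul_eq_zero.1 h2 with h2 | h2
        · exact absurd (by linear_combination h2) (exp_I_zpow_ne_one hμ)
        · exact h2
      constructor
      · intro w _; rw [hupdate, hfz, zero_mul]
      · intro _; exact hfz
  · -- main case
    have hznorm : ‖z‖ < r := by simpa [Metric.mem_ball] using hz
    have hzpos : 0 < ‖z‖ := by
      have := norm_le_pi_norm z i
      have : 0 < ‖z i‖ := norm_pos_iff.2 hzi
      calc (0:ℝ) < ‖z i‖ := this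
        _ ≤ ‖z‖ := norm_le_pi_norm z i
    set R := r / ‖z‖ with hR
    have hR1 : 1 < R := (one_lt_div hzpos).2 hznorm
    set ψ : ℂ → ℂ := fun w => f (z + (w - 1) • (Pi.single i (z i) : Fin n → ℂ)) with hψdef
    have hmem : ∀ w : ℂ, w ∈ Metric.ball (0:ℂ) R →
        Function.update z i (w * z i) ∈ Metric.ball (0 : Fin n → ℂ) r := by
      intro w hw
      have hwn : ‖w‖ < R := by simpa [Metric.mem_ball] using hw
      rw [mem_ball_zero_iff, pi_norm_lt_iff hr]
      intro j
      by_cases hj : j = i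
      · subst hj
        simp only [Function.update_self, norm_mul]
        calc ‖w‖ * ‖z j‖ ≤ ‖w‖ * ‖z‖ := by
              apply mul_le_mul_of_nonneg_left (norm_le_pi_norm z j) (norm_nonneg w)
          _ < R * ‖z‖ := by exact mul_lt_mul_of_pos_right hwn hzpos
          _ = r := div_mul_cancel₀ r hzpos.ne'
      · rw [Function.update_of_ne hj]
        calc ‖z j‖ ≤ ‖z‖ := norm_le_pi_norm z j
          _ < r := hznorm
    have hψ : AnalyticOnNhd ℂ ψ (Metric.ball 0 R) := by
      intro w hw
      have hinner : AnalyticAt ℂ (fun w : ℂ => z + (w - 1) • (Pi.single i (z i) : Fin n → ℂ)) w :=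
        analyticAt_const.add ((analyticAt_id.sub analyticAt_const).smul analyticAt_const)
      have houter : AnalyticAt ℂ f (z + (w - 1) • (Pi.single i (z i) : Fin n → ℂ)) := by
        apply hf
        apply hball
        rw [← update_eq_affine]
        exact hmem w hw
      show AnalyticAt ℂ (f ∘ fun w : ℂ => z + (w - 1) • (Pi.single i (z i) : Fin n → ℂ)) w
      exact AnalyticAt.comp (g := f)
        (f := fun w : ℂ => z + (w - 1) • (Pi.single i (z i) : Fin n → ℂ)) houter hinner
    have hcirc' : ∀ w : ℂ, ‖w‖ = 1 → ψ w = f z * w ^ (μ i) := by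
      intro w hw
      rw [hψdef]
      simp only [← update_eq_affine]
      rw [hcirc w hw]; ring
    obtain ⟨hmain, hneg⟩ := key_one_var R hR1 ψ hψ (μ i) (f z) hcirc'
    constructor
    · intro w hw
      have := hmain w hw
      rw [hψdef] at this
      simp only [← update_eq_affine] at this
      exact this
    · exact hneg

lemma scaleAll {n : ℕ} {Ω : Set (Fin n → ℂ)} {f : (Fin n → ℂ) → ℂ} {μ : Fin n → ℤ}
    (hf : AnalyticOnNhd ℂ f Ω)
    (heqf : ∀ a : Fin n → ℂ, (∀ i, ‖a i‖ = 1) → ∀ z ∈ Ω,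
      f (fun i => a i * z i) = (∏ i, a i ^ μ i) * f z)
    {r : ℝ} (hr : 0 < r) (hball : Metric.ball (0 : Fin n → ℂ) r ⊆ Ω)
    (s : Finset (Fin n)) {z : Fin n → ℂ} (hz : z ∈ Metric.ball (0 : Fin n → ℂ) r)
    (w : Fin n → ℂ) (hw : ∀ i, ‖w i‖ ≤ 1) :
    f (fun j => if j ∈ s then w j * z j else z j)
      = (∏ j ∈ s, w j ^ (μ j).toNat) * f z := by
  induction s using Finset.induction_on with
  | empty => simp
  | insert _ _ hi =>
    rename_i i s ih
    set z' : Fin n → ℂ := fun j => if j ∈ s then w j * z j else z j with hz'def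
    have hz' : z' ∈ Metric.ball (0 : Fin n → ℂ) r := by
      have hznorm : ‖z‖ < r := by simpa [Metric.mem_ball] using hz
      rw [mem_ball_zero_iff, pi_norm_lt_iff hr]
      intro j
      have hle : ‖z' j‖ ≤ ‖z j‖ := by
        rw [hz'def]; dsimp only
        split
        · rw [norm_mul]
          calc ‖w j‖ * ‖z j‖ ≤ 1 * ‖z j‖ :=
              mul_le_mul_of_nonneg_right (hw j) (norm_nonneg _)
            _ = ‖z j‖ := one_mul _
        · exact le_rfl
      calc ‖z' j‖ ≤ ‖z j‖ := hle
        _ ≤ ‖z‖ := norm_le_pi_norm z j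
        _ < r := hznorm
    have hstep := (coordScale hf heqf hr hball hz' i).1 (w i) (hw i)
    have hz'i : z' i = z i := by simp [hz'def, hi]
    have hupd : Function.update z' i (w i * z' i)
        = fun j => if j ∈ insert i s then w j * z j else z j := by
      funext j
      by_cases hj : j = i
      · subst hj; simp [hz'i]
      · simp [Function.update_of_ne hj, hz'def, hj]
    rw [← hupd, hstep, ih, Finset.prod_insert hi]
    ring

/-- On a nonempty connected open torus-invariant set Ω ⊆ ℂⁿ containing the
origin, two holomorphic functions of the same weight μ for the coordinatewise (S¹)ⁿ-action
are linearly dependent. -/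
theorem stmt_2 (n : ℕ) (Ω : Set (Fin n → ℂ))
    (h0 : (0 : Fin n → ℂ) ∈ Ω) (hopen : IsOpen Ω) (hconn : IsConnected Ω)
    (hinv : ∀ a : Fin n → ℂ, (∀ i, ‖a i‖ = 1) → ∀ z ∈ Ω, (fun i => a i * z i) ∈ Ω)
    (μ : Fin n → ℤ) (f g : (Fin n → ℂ) → ℂ)
    (hf : AnalyticOnNhd ℂ f Ω) (hg : AnalyticOnNhd ℂ g Ω)
    (heqf : ∀ a : Fin n → ℂ, (∀ i, ‖a i‖ = 1) → ∀ z ∈ Ω,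
      f (fun i => a i * z i) = (∏ i, a i ^ μ i) * f z)
    (heqg : ∀ a : Fin n → ℂ, (∀ i, ‖a i‖ = 1) → ∀ z ∈ Ω,
      g (fun i => a i * z i) = (∏ i, a i ^ μ i) * g z) :
    ∃ c₁ c₂ : ℂ, (c₁, c₂) ≠ (0, 0) ∧ ∀ z ∈ Ω, c₁ * f z + c₂ * g z = 0 := by
  obtain ⟨r, hr, hball⟩ := Metric.isOpen_iff.1 hopen 0 h0
  set ρ := r / 2 with hρdef
  have hρ : 0 < ρ := by positivity
  have hρr : ρ < r := by rw [hρdef]; linarith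
  set ζ : Fin n → ℂ := fun _ => (ρ : ℂ) with hζdef
  have hζ : ζ ∈ Metric.ball (0 : Fin n → ℂ) r := by
    rw [mem_ball_zero_iff, pi_norm_lt_iff hr]
    intro j
    simp only [hζdef, Complex.norm_real]
    rw [Real.norm_eq_abs, abs_of_pos hρ]; exact hρr
  have hρC : (ρ : ℂ) ≠ 0 := Complex.ofReal_ne_zero.2 hρ.ne'
  -- the general formula on the small ball
  have hform : ∀ (F : (Fin n → ℂ) → ℂ), AnalyticOnNhd ℂ F Ω →
      (∀ a : Fin n → ℂ, (∀ i, ‖a i‖ = 1) → ∀ z ∈ Ω,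
        F (fun i => a i * z i) = (∏ i, a i ^ μ i) * F z) →
      ∀ z ∈ Metric.ball (0 : Fin n → ℂ) ρ,
        F z = (∏ j, (z j / ρ) ^ (μ j).toNat) * F ζ := by
    intro F hF heqF z hz
    have hzρ : ‖z‖ < ρ := by simpa [Metric.mem_ball] using hz
    have hw : ∀ i, ‖z i / (ρ:ℂ)‖ ≤ 1 := by
      intro i
      rw [norm_div, Complex.norm_real, Real.norm_eq_abs, abs_of_pos hρ, div_le_one hρ]
      calc ‖z i‖ ≤ ‖z‖ := norm_le_pi_norm z i
        _ ≤ ρ := hzρ.le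
    have := scaleAll hF heqF hr hball Finset.univ hζ (fun j => z j / ρ) hw
    have hfun : (fun j => if j ∈ Finset.univ then (z j / (ρ:ℂ)) * ζ j else ζ j) = z := by
      funext j
      simp [hζdef, div_mul_cancel₀ _ hρC]
    rw [hfun] at this
    simpa using this
  by_cases hfζ : f ζ = 0
  · -- f vanishes near 0, hence on Ω
    refine ⟨1, 0, by simp, ?_⟩
    have hev : f =ᶠ[nhds (0 : Fin n → ℂ)] 0 := by
      filter_upwards [Metric.ball_mem_nhds (0 : Fin n → ℂ) hρ] with z hz
      rw [hform f hf heqf z hz, hfζ, mul_zero]; rfl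
    have := hf.eqOn_zero_of_preconnected_of_eventuallyEq_zero hconn.isPreconnected h0 hev
    intro z hz
    have := this hz
    simp only [Pi.zero_apply] at this
    rw [this]; ring
  · refine ⟨g ζ, -(f ζ), ?_, ?_⟩
    · intro h
      rw [Prod.mk.injEq] at h
      exact hfζ (neg_eq_zero.1 h.2)
    · set h : (Fin n → ℂ) → ℂ := fun z => g ζ * f z + (-(f ζ)) * g z with hhdef
      have hh : AnalyticOnNhd ℂ h Ω :=
        (analyticOnNhd_const.mul hf).add (analyticOnNhd_const.mul hg)
      have hev : h =ᶠ[nhds (0 : Fin n → ℂ)] 0 := by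
        filter_upwards [Metric.ball_mem_nhds (0 : Fin n → ℂ) hρ] with z hz
        rw [hhdef]
        simp only [Pi.zero_apply]
        rw [hform f hf heqf z hz, hform g hg heqg z hz]
        ring
      have := hh.eqOn_zero_of_preconnected_of_eventuallyEq_zero hconn.isPreconnected h0 hev
      intro z hz
      have := this hz
      simpa [hhdef] using this
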